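/- For the distribution D_ε on {0,1}³ with P(Y=1)=1/2, P(A=y|Y=y)=1−ε, P(X=y|Y=y)=1−2ε (X and A conditionally independent given Y), and 0<ε<1/4, the Bayes optimal predictor of Y from (X,A) under 0-1 loss is h(x,a)=a; i.e., for all x,a∈{0,1}, P(Y=a | X=x, A=a) > 1/2. -/
import Mathlib


/-- The joint pmf of `(X, A, Y)` under `D_ε`: `Y` uniform on `{0,1}`, and conditioned on `Y`,
`X` and `A` independent with `P(A = Y) = 1 - ε` and `P(X = Y) = 1 - 2ε`. -/
noncomputable def pD (ε : ℝ) (x a y : Bool) : ℝ :=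
  (1 / 2) * (if a = y then 1 - ε else ε) * (if x = y then 1 - 2 * ε else 2 * ε)

/-- Under `D_ε` with `0 < ε < 1/4`, for all `x, a ∈ {0,1}` we have
`P(Y = a | X = x, A = a) > 1/2`, i.e. the Bayes optimal predictor of `Y` from `(X, A)`
under 0-1 loss is `h(x, a) = a`. -/
theorem stmt0 (ε : ℝ) (hε0 : 0 < ε) (hε1 : ε < 1 / 4) (x a : Bool) :
    pD ε x a a / (pD ε x a false + pD ε x a true) > 1 / 2 := by
  have h1 : (0:ℝ) < 1 - 2 * ε := by linarith
  have h2 : (0:ℝ) < 1 - ε := by linarith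
  cases x <;> cases a <;> simp [pD] <;>
    rw [lt_div_iff₀ (by nlinarith)] <;> nlinarith
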